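/- For every positive integer r, the mean value M(c*(·,r)²) of the function n ↦ c*(n,r)² exists and equals φ*(r), where φ*(r) = #{k : 1 ≤ k ≤ r and (k,r)_U = 1} is the unitary Euler function (equivalently, φ*(r) = Π_{p^a ∥ r} (p^a − 1), the product over the maximal prime powers p^a exactly dividing r). -/

import Mathlib

open Finset Filter Topology

/-- The unitary gcd `(n,r)_U`: the largest `d` with `d ∣ n`, `d ∣ r` and `gcd(d, r/d) = 1`. -/
def unitaryGcd (n r : ℕ) : ℕ :=
  (r.divisors.filter (fun d => d ∣ n ∧ Nat.Coprime d (r / d))).sup id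

/-- The unitary Ramanujan sum `c*(n,r) = ∑_{1 ≤ k ≤ r, (k,r)_U = 1} exp(2πikn/r)`. -/
noncomputable def unitaryRamanujanSum (n r : ℕ) : ℂ :=
  ∑ k ∈ (Finset.Icc 1 r).filter (fun k => unitaryGcd k r = 1),
    Complex.exp (2 * Real.pi * Complex.I * k * n / r)

/-- The unitary Euler function `φ*(r) = #{1 ≤ k ≤ r : (k,r)_U = 1}`. -/
def unitaryTotient (r : ℕ) : ℕ :=
  ((Finset.Icc 1 r).filter (fun k => unitaryGcd k r = 1)).card

lemma unitaryGcd_spec {r : ℕ} (hr : 0 < r) (n : ℕ) :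
    unitaryGcd n r ∣ n ∧ unitaryGcd n r ∣ r ∧
      Nat.Coprime (unitaryGcd n r) (r / unitaryGcd n r) ∧ 0 < unitaryGcd n r := by
  have hne : (r.divisors.filter (fun d => d ∣ n ∧ Nat.Coprime d (r / d))).Nonempty := by
    refine ⟨1, ?_⟩
    simp [Nat.mem_divisors, hr.ne', Nat.Coprime]
  obtain ⟨d, hd, he⟩ := Finset.exists_mem_eq_sup _ hne id
  rw [Finset.mem_filter, Nat.mem_divisors] at hd
  unfold unitaryGcd
  rw [he]
  exact ⟨hd.2.1, hd.1.1, hd.2.2, Nat.pos_of_dvd_of_pos hd.1.1 hr⟩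

lemma le_unitaryGcd {r d n : ℕ} (hr : 0 < r) (hdn : d ∣ n) (hdr : d ∣ r)
    (hco : Nat.Coprime d (r / d)) : d ≤ unitaryGcd n r :=
  Finset.le_sup (f := id)
    (by rw [Finset.mem_filter, Nat.mem_divisors]; exact ⟨⟨hdr, hr.ne'⟩, hdn, hco⟩)

lemma unitaryGcd_sub {r j : ℕ} (hr : 0 < r) (hj : unitaryGcd j r = 1) (hjr : j ≤ r) :
    unitaryGcd (r - j) r = 1 := by
  obtain ⟨h1, h2, h3, h4⟩ := unitaryGcd_spec hr (r - j)
  have hdj : unitaryGcd (r - j) r ∣ j := by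
    have h5 := Nat.dvd_sub h2 h1
    rwa [show r - (r - j) = j by omega] at h5
  have := le_unitaryGcd hr hdj h2 h3
  omega

lemma F_dvd {r m : ℕ} (hr : 0 < r) (hm : r ∣ m) (N : ℕ) :
    ∑ n ∈ Finset.Icc 1 N, Complex.exp (2 * Real.pi * Complex.I * m * n / r) = N := by
  obtain ⟨q, rfl⟩ := hm
  have hrc : (r : ℂ) ≠ 0 := Nat.cast_ne_zero.2 hr.ne'
  have h1 : ∀ n ∈ Finset.Icc 1 N,
      Complex.exp (2 * Real.pi * Complex.I * (↑(r * q)) * n / r) = 1 := by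
    intro n _
    have harg : (2 * (Real.pi:ℂ) * Complex.I * (↑(r * q)) * n / r)
        = ((q * n : ℕ) : ℤ) * (2 * Real.pi * Complex.I) := by
      push_cast
      field_simp
    rw [harg, Complex.exp_int_mul_two_pi_mul_I]
  rw [Finset.sum_congr rfl h1]
  simp [Nat.card_Icc]

lemma F_bound {r m : ℕ} (hr : 0 < r) (hm : ¬ r ∣ m) :
    ∃ C : ℝ, ∀ N : ℕ, ‖∑ n ∈ Finset.Icc 1 N,
      Complex.exp (2 * Real.pi * Complex.I * m * n / r)‖ ≤ C := by
  have hrc : (r : ℂ) ≠ 0 := Nat.cast_ne_zero.2 hr.ne'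
  set z := Complex.exp (2 * Real.pi * Complex.I * m / r) with hz
  have hz1 : z ≠ 1 := by
    intro h
    rw [Complex.exp_eq_one_iff] at h
    obtain ⟨k, hk⟩ := h
    have h2pi : (2 * (Real.pi:ℂ) * Complex.I) ≠ 0 := by
      apply mul_ne_zero (mul_ne_zero two_ne_zero ?_) Complex.I_ne_zero
      exact_mod_cast Real.pi_ne_zero
    have hkey : (2 * (Real.pi:ℂ) * Complex.I) * (m : ℂ)
        = (2 * (Real.pi:ℂ) * Complex.I) * ((k : ℂ) * r) := by
      field_simp at hk
      linear_combination (2 * (Real.pi:ℂ) * Complex.I) * hk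
    have hmk : (m : ℂ) = (k : ℂ) * r := mul_left_cancel₀ h2pi hkey
    have hmk' : (m : ℤ) = k * r := by exact_mod_cast hmk
    exact hm (Int.natCast_dvd_natCast.mp ⟨k, by rw [hmk', mul_comm]⟩)
  have habs : ‖z‖ = 1 := by
    have harg : 2 * (Real.pi:ℂ) * Complex.I * m / r
        = ((2 * Real.pi * m / r : ℝ) : ℂ) * Complex.I := by push_cast; ring
    rw [hz, harg, Complex.norm_exp_ofReal_mul_I]
  refine ⟨2 / ‖z - 1‖, fun N => ?_⟩
  have hsum : ∑ n ∈ Finset.Icc 1 N, Complex.exp (2 * Real.pi * Complex.I * m * n / r)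
      = (z ^ (N + 1) - z ^ 1) / (z - 1) := by
    rw [← geom_sum_Ico hz1 (Nat.le_add_left 1 N)]
    rw [show Finset.Icc 1 N = Finset.Ico 1 (N + 1) by rw [Finset.Ico_add_one_right_eq_Icc]]
    refine Finset.sum_congr rfl fun n _ => ?_
    rw [← Complex.exp_nat_mul]
    congr 1
    push_cast
    ring
  rw [hsum, norm_div]
  gcongr
  calc ‖z ^ (N + 1) - z ^ 1‖
      ≤ ‖z ^ (N + 1)‖ + ‖z ^ 1‖ := by
        exact (norm_sub_le _ _)
    _ ≤ 2 := by rw [norm_pow, norm_pow, habs]; norm_num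

lemma sum_ite_card {r : ℕ} (hr : 0 < r) :
    ∑ p ∈ ((Finset.Icc 1 r).filter (fun k => unitaryGcd k r = 1)) ×ˢ
          ((Finset.Icc 1 r).filter (fun k => unitaryGcd k r = 1)),
      (if r ∣ p.1 + p.2 then (1:ℂ) else 0) = (unitaryTotient r : ℂ) := by
  set S := (Finset.Icc 1 r).filter (fun k => unitaryGcd k r = 1) with hS
  rw [Finset.sum_product]
  have hinner : ∀ j ∈ S, ∑ k ∈ S, (if r ∣ j + k then (1:ℂ) else 0) = 1 := by
    intro j hj
    rw [hS, Finset.mem_filter, Finset.mem_Icc] at hj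
    obtain ⟨⟨hj1, hj2⟩, hju⟩ := hj
    set t := if j = r then r else r - j with ht
    have htS : t ∈ S := by
      rw [hS, Finset.mem_filter, Finset.mem_Icc, ht]
      by_cases h : j = r
      · rw [if_pos h]
        exact ⟨⟨hr, le_refl r⟩, h ▸ hju⟩
      · rw [if_neg h]
        exact ⟨⟨by omega, by omega⟩, unitaryGcd_sub hr hju hj2⟩
    have hiff : ∀ k ∈ S, (r ∣ j + k ↔ k = t) := by
      intro k hk
      rw [hS, Finset.mem_filter, Finset.mem_Icc] at hk
      obtain ⟨⟨hk1, hk2⟩, -⟩ := hk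
      by_cases h : j = r
      · rw [ht, if_pos h]
        subst h
        constructor
        · intro hd
          have hd' : j ∣ k := (Nat.dvd_add_right (dvd_refl j)).mp hd
          have := Nat.le_of_dvd (by omega) hd'
          omega
        · rintro rfl; exact ⟨2, by ring⟩
      · rw [ht, if_neg h]
        constructor
        · rintro ⟨c, hc⟩
          have hc1 : c = 1 := by
            rcases Nat.lt_or_ge c 2 with h2 | h2
            · interval_cases c <;> omega
            · have h3 : r * 2 ≤ r * c := Nat.mul_le_mul_left r h2
              omega
          subst hc1
          omega
        · intro hkt; exact ⟨1, by omega⟩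
    calc ∑ k ∈ S, (if r ∣ j + k then (1:ℂ) else 0)
        = ∑ k ∈ S, (if k = t then (1:ℂ) else 0) :=
          Finset.sum_congr rfl fun k hk => by rw [if_congr (hiff k hk) rfl rfl]
      _ = 1 := by rw [Finset.sum_ite_eq' S t (fun _ => (1:ℂ)), if_pos htS]
  rw [Finset.sum_congr rfl hinner]
  simp [unitaryTotient, hS]

lemma tendsto_pair {r : ℕ} (hr : 0 < r) (m : ℕ) :
    Tendsto (fun x : ℝ => (∑ n ∈ Finset.Icc 1 ⌊x⌋₊,
        Complex.exp (2 * Real.pi * Complex.I * m * n / r)) / (x : ℂ)) atTop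
      (𝓝 (if r ∣ m then (1:ℂ) else 0)) := by
  by_cases hm : r ∣ m
  · rw [if_pos hm]
    have h1 : Tendsto (fun x : ℝ => ((⌊x⌋₊ : ℝ) / x : ℝ)) atTop (𝓝 1) :=
      tendsto_nat_floor_div_atTop
    have h2 := (Complex.continuous_ofReal.tendsto 1).comp h1
    have h3 : Tendsto (fun x : ℝ => ((⌊x⌋₊ : ℂ) / (x : ℂ))) atTop (𝓝 1) := by
      rw [show (1 : ℂ) = ((1 : ℝ) : ℂ) by norm_num]
      refine h2.congr fun x => ?_
      simp [Function.comp]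
    refine h3.congr fun x => ?_
    rw [F_dvd hr hm]
  · rw [if_neg hm]
    obtain ⟨C, hC⟩ := F_bound hr hm
    apply squeeze_zero_norm' (a := fun x : ℝ => C / x)
    · filter_upwards [eventually_ge_atTop (1 : ℝ)] with x hx
      rw [norm_div]
      have hx0 : (0:ℝ) < x := by linarith
      have hnx : ‖(x : ℂ)‖ = x := by
        rw [Complex.norm_real, Real.norm_of_nonneg hx0.le]
      rw [hnx]
      gcongr
      exact hC _
    · exact tendsto_const_nhds.div_atTop tendsto_id

/-- The mean value of `n ↦ c*(n,r)²` exists and equals `φ*(r)`. -/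
theorem unitaryRamanujanSum_sq_meanValue (r : ℕ) (hr : 0 < r) :
    Tendsto
      (fun x : ℝ => (∑ n ∈ Finset.Icc 1 ⌊x⌋₊, (unitaryRamanujanSum n r) ^ 2) / (x : ℂ))
      atTop (𝓝 ((unitaryTotient r : ℂ))) := by
  classical
  set S := (Finset.Icc 1 r).filter (fun k => unitaryGcd k r = 1) with hS
  have hrc : (r : ℂ) ≠ 0 := Nat.cast_ne_zero.2 hr.ne'
  have hsq : ∀ n : ℕ, unitaryRamanujanSum n r ^ 2 =
      ∑ p ∈ S ×ˢ S, Complex.exp (2 * Real.pi * Complex.I * (↑(p.1 + p.2)) * n / r) := by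
    intro n
    rw [unitaryRamanujanSum, sq, Finset.sum_mul_sum, Finset.sum_product]
    refine Finset.sum_congr rfl fun j _ => Finset.sum_congr rfl fun k _ => ?_
    rw [← Complex.exp_add]
    congr 1
    push_cast
    field_simp
  have heq : ∀ x : ℝ, (∑ n ∈ Finset.Icc 1 ⌊x⌋₊, unitaryRamanujanSum n r ^ 2) / (x : ℂ)
      = ∑ p ∈ S ×ˢ S, (∑ n ∈ Finset.Icc 1 ⌊x⌋₊,
          Complex.exp (2 * Real.pi * Complex.I * (↑(p.1 + p.2)) * n / r)) / (x : ℂ) := by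
    intro x
    rw [Finset.sum_congr rfl fun n _ => hsq n, Finset.sum_comm, Finset.sum_div]
  rw [show (unitaryTotient r : ℂ)
      = ∑ p ∈ S ×ˢ S, (if r ∣ p.1 + p.2 then (1:ℂ) else 0) from (sum_ite_card hr).symm]
  refine Tendsto.congr (fun x => (heq x).symm) ?_
  exact tendsto_finset_sum _ fun p _ => tendsto_pair hr (p.1 + p.2)
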